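/- arXiv:1904.06461 — 3 statements merged into one kernel-verified Lean document; each statement's English description precedes it below -/
import Mathlib

section
/- Let A, C be real n×n matrices and b, x̂ real n-vectors. If ‖I − CA‖_∞ < 1, then componentwise |A⁻¹b − x̂| ≤ |C(b − Ax̂)| + (‖C(b − Ax̂)‖_∞ / (1 − ‖I − CA‖_∞))·|I − CA|·e, where e = (1,…,1)ᵀ. -/
open Matrix

/-- Matrix infinity norm: maximum absolute row sum. -/
noncomputable def rowSumNorm {n : ℕ} (M : Matrix (Fin n) (Fin n) ℝ) : ℝ :=
  ⨆ i, ∑ j, |M i j|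

/-- Vector infinity norm: maximum absolute entry. -/
noncomputable def vecInfNorm {n : ℕ} (v : Fin n → ℝ) : ℝ :=
  ⨆ i, |v i|

lemma abs_le_vecInfNorm {n : ℕ} (v : Fin n → ℝ) (i : Fin n) : |v i| ≤ vecInfNorm v := by
  unfold vecInfNorm
  exact le_ciSup (f := fun i => |v i|) (Set.Finite.bddAbove (Set.finite_range _)) i

lemma rowSum_le_rowSumNorm {n : ℕ} (M : Matrix (Fin n) (Fin n) ℝ) (i : Fin n) :
    ∑ j, |M i j| ≤ rowSumNorm M := by
  unfold rowSumNorm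
  exact le_ciSup (f := fun i => ∑ j, |M i j|) (Set.Finite.bddAbove (Set.finite_range _)) i

/-- Yamamoto's theorem: componentwise error bound for linear systems. -/
theorem stmt1 {n : ℕ} (A C : Matrix (Fin n) (Fin n) ℝ) (b xh : Fin n → ℝ)
    (h : rowSumNorm (1 - C * A) < 1) :
    ∀ i, |(A⁻¹.mulVec b - xh) i| ≤
      |(C.mulVec (b - A.mulVec xh)) i| +
        vecInfNorm (C.mulVec (b - A.mulVec xh)) / (1 - rowSumNorm (1 - C * A)) *
          (∑ j, |(1 - C * A) i j|) := by
  intro i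
  haveI : Nonempty (Fin n) := ⟨i⟩
  set G := 1 - C * A with hG
  set nG := rowSumNorm G with hnG
  have hnG0 : 0 ≤ nG := by
    have h1 := rowSum_le_rowSumNorm G i
    have h0 : (0:ℝ) ≤ ∑ j, |G i j| := Finset.sum_nonneg fun j _ => abs_nonneg _
    linarith
  have h1 : 0 < 1 - nG := by linarith
  -- mulVec of G bound
  have Gbound : ∀ (v : Fin n → ℝ) (k : Fin n),
      |(G.mulVec v) k| ≤ (∑ j, |G k j|) * vecInfNorm v := by
    intro v k
    have : |(G.mulVec v) k| ≤ ∑ j, |G k j| * |v j| := by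
      rw [Matrix.mulVec, dotProduct]
      refine (Finset.abs_sum_le_sum_abs _ _).trans ?_
      simp [abs_mul]
    refine this.trans ?_
    rw [Finset.sum_mul]
    exact Finset.sum_le_sum fun j _ =>
      mul_le_mul_of_nonneg_left (abs_le_vecInfNorm v j) (abs_nonneg _)
  -- A is invertible
  have hdetCA : (C * A).det ≠ 0 := by
    intro hdet
    obtain ⟨v, hv, hv0⟩ := (Matrix.exists_mulVec_eq_zero_iff).mpr hdet
    obtain ⟨k, hk⟩ := Finite.exists_max fun j => |v j|
    have hvk : 0 < |v k| := by
      rcases Function.ne_iff.mp hv with ⟨j, hj⟩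
      exact lt_of_lt_of_le (abs_pos.mpr hj) (hk j)
    have hveq : G.mulVec v = v := by
      have : G.mulVec v = v - (C * A).mulVec v := by
        rw [hG, Matrix.sub_mulVec, Matrix.one_mulVec]
      rw [this, hv0, sub_zero]
    have hle : |v k| ≤ nG * |v k| := by
      have h2 := Gbound v k
      rw [hveq] at h2
      have h3 : vecInfNorm v = |v k| :=
        le_antisymm (ciSup_le hk) (abs_le_vecInfNorm v k)
      rw [h3] at h2
      have h4 := rowSum_le_rowSumNorm G k
      nlinarith
    nlinarith
  have hdetA : IsUnit A.det := by
    refine isUnit_iff_ne_zero.mpr fun h0 => ?_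
    rw [Matrix.det_mul, h0, mul_zero] at hdetCA
    exact hdetCA rfl
  have hAinv : A * A⁻¹ = 1 := Matrix.mul_nonsing_inv A hdetA
  set d := A⁻¹.mulVec b - xh with hd
  set r := C.mulVec (b - A.mulVec xh) with hr
  have hAd : A.mulVec d = b - A.mulVec xh := by
    rw [hd, Matrix.mulVec_sub, Matrix.mulVec_mulVec, hAinv, Matrix.one_mulVec]
  have key : r = (C * A).mulVec d := by
    rw [hr, ← hAd, Matrix.mulVec_mulVec]
  have hdeq : ∀ k, d k = r k + (G.mulVec d) k := by
    intro k
    have : G.mulVec d = d - (C * A).mulVec d := by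
      rw [hG, Matrix.sub_mulVec, Matrix.one_mulVec]
    rw [this, ← key]
    simp
  have step : ∀ k, |d k| ≤ |r k| + (∑ j, |G k j|) * vecInfNorm d := by
    intro k
    rw [hdeq k]
    exact (abs_add_le _ _).trans (add_le_add_right (Gbound d k) _)
  have hdnorm : vecInfNorm d ≤ vecInfNorm r / (1 - nG) := by
    obtain ⟨k, hk⟩ := Finite.exists_max fun j => |d j|
    have hvd : vecInfNorm d = |d k| :=
      le_antisymm (ciSup_le hk) (abs_le_vecInfNorm d k)
    have h2 := step k
    have h3 : |r k| ≤ vecInfNorm r := abs_le_vecInfNorm r k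
    have h4 : ∑ j, |G k j| ≤ nG := rowSum_le_rowSumNorm G k
    have h5 : 0 ≤ vecInfNorm d := (abs_nonneg _).trans (abs_le_vecInfNorm d i)
    rw [le_div_iff₀ h1]
    nlinarith
  have hsum : (0:ℝ) ≤ ∑ j, |G i j| := Finset.sum_nonneg fun j _ => abs_nonneg _
  calc |d i| ≤ |r i| + (∑ j, |G i j|) * vecInfNorm d := step i
    _ ≤ |r i| + (∑ j, |G i j|) * (vecInfNorm r / (1 - nG)) :=
        add_le_add_right (mul_le_mul_of_nonneg_left hdnorm hsum) _
    _ = |r i| + vecInfNorm r / (1 - nG) * (∑ j, |G i j|) := by ring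
end

section
/- Let A, B, C, X̂ be real n×n matrices. If ‖I − CA‖_∞ < 1, then A is nonsingular and |A⁻¹B − X̂|·e ≤ |C(B − AX̂)|·e + (‖C(B − AX̂)‖_∞ / (1 − ‖I − CA‖_∞))·|I − CA|·e. -/
open Matrix

open scoped NNReal

attribute [local instance] Matrix.linftyOpNormedRing Matrix.linftyOpNormedAlgebra

lemma rowSumNorm_eq_norm {n : ℕ} [Nonempty (Fin n)] (M : Matrix (Fin n) (Fin n) ℝ) :
    rowSumNorm M = ‖M‖ := by
  have hcast : ∀ i, ((∑ j, ‖M i j‖₊ : ℝ≥0) : ℝ) = ∑ j, |M i j| := by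
    intro i
    push_cast
    simp [Real.norm_eq_abs]
  apply le_antisymm
  · refine ciSup_le fun i => ?_
    rw [Matrix.linfty_opNorm_def]
    have hle : (∑ j, ‖M i j‖₊ : ℝ≥0) ≤ Finset.univ.sup fun i => ∑ j, ‖M i j‖₊ :=
      Finset.le_sup (f := fun i => ∑ j, ‖M i j‖₊) (Finset.mem_univ i)
    calc ∑ j, |M i j| = ((∑ j, ‖M i j‖₊ : ℝ≥0) : ℝ) := (hcast i).symm
      _ ≤ _ := NNReal.coe_le_coe.mpr hle
  · rw [Matrix.linfty_opNorm_def]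
    obtain ⟨i, -, hi⟩ := Finset.exists_mem_eq_sup Finset.univ Finset.univ_nonempty
      (fun i => ∑ j, ‖M i j‖₊)
    rw [hi]
    calc ((∑ j, ‖M i j‖₊ : ℝ≥0) : ℝ) = ∑ j, |M i j| := hcast i
      _ ≤ rowSumNorm M := by
          rw [rowSumNorm]
          exact le_ciSup (f := fun i => ∑ j, |M i j|) (Set.Finite.bddAbove (Set.finite_range _)) i

/-- Variant of Yamamoto's theorem for matrix right-hand sides:
`|A⁻¹B − X̂|·e ≤ |C(B − AX̂)|·e + (‖C(B − AX̂)‖_∞/(1 − ‖I − CA‖_∞))·|I − CA|·e`. -/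
theorem stmt2 {n : ℕ} (A B C Xh : Matrix (Fin n) (Fin n) ℝ)
    (h : rowSumNorm (1 - C * A) < 1) :
    IsUnit A ∧
      ∀ i, (∑ j, |(A⁻¹ * B - Xh) i j|) ≤
        (∑ j, |(C * (B - A * Xh)) i j|) +
          rowSumNorm (C * (B - A * Xh)) / (1 - rowSumNorm (1 - C * A)) *
            (∑ j, |(1 - C * A) i j|) := by
  rcases Nat.eq_zero_or_pos n with hn | hn
  · subst hn
    have : Subsingleton (Matrix (Fin 0) (Fin 0) ℝ) :=
      ⟨fun a b => by ext i j; exact i.elim0⟩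
    exact ⟨isUnit_of_subsingleton A, fun i => i.elim0⟩
  · have hne : Nonempty (Fin n) := ⟨⟨0, hn⟩⟩
    set R := 1 - C * A with hRdef
    set F := C * (B - A * Xh) with hFdef
    have hRn : ‖R‖ < 1 := by rw [← rowSumNorm_eq_norm]; exact h
    have hCA : IsUnit (C * A) := by
      have h1 := (Units.oneSub R hRn).isUnit
      have h2 : (1 : Matrix (Fin n) (Fin n) ℝ) - R = C * A := by rw [hRdef, sub_sub_cancel]
      rwa [show ((Units.oneSub R hRn : (Matrix (Fin n) (Fin n) ℝ)ˣ) : Matrix (Fin n) (Fin n) ℝ)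
        = 1 - R from rfl, h2] at h1
    have hAd : IsUnit A.det := by
      have hd : IsUnit (C.det * A.det) := by
        rw [← Matrix.det_mul]
        exact (Matrix.isUnit_iff_isUnit_det _).mp hCA
      exact isUnit_of_mul_isUnit_right hd
    have hA : IsUnit A := (Matrix.isUnit_iff_isUnit_det A).mpr hAd
    have hAA : A * A⁻¹ = 1 := Matrix.mul_nonsing_inv A hAd
    set E := A⁻¹ * B - Xh with hEdef
    have hCAB : C * A * (A⁻¹ * B) = C * B := by
      rw [← mul_assoc, mul_assoc C A A⁻¹, hAA, mul_one]
    have hE : E = F + R * E := by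
      have hstep : F + R * E = C * B - C * A * Xh + (E - C * A * (A⁻¹ * B) + C * A * Xh) := by
        simp only [hFdef, hRdef, hEdef]
        noncomm_ring
      rw [hstep, hCAB]
      abel
    have hEij : ∀ i j, E i j = F i j + (R * E) i j := by
      intro i j
      conv_lhs => rw [hE]
      rfl
    have hEn : ‖E‖ ≤ ‖F‖ + ‖R‖ * ‖E‖ := by
      calc ‖E‖ = ‖F + R * E‖ := by rw [← hE]
        _ ≤ ‖F‖ + ‖R * E‖ := norm_add_le _ _
        _ ≤ ‖F‖ + ‖R‖ * ‖E‖ := by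
            have := Matrix.linfty_opNorm_mul R E
            linarith
    have h1R : 0 < 1 - ‖R‖ := by linarith
    have hEb : ‖E‖ ≤ ‖F‖ / (1 - ‖R‖) := by
      rw [le_div_iff₀ h1R]
      nlinarith [hEn]
    refine ⟨hA, fun i => ?_⟩
    have rowE : ∀ k, ∑ j, |E k j| ≤ ‖E‖ := by
      intro k
      rw [← rowSumNorm_eq_norm, rowSumNorm]
      exact le_ciSup (f := fun k => ∑ j, |E k j|) (Set.Finite.bddAbove (Set.finite_range _)) k
    have hRE : ∑ j, |(R * E) i j| ≤ ‖E‖ * ∑ k, |R i k| := by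
      calc ∑ j, |(R * E) i j| ≤ ∑ j, ∑ k, |R i k| * |E k j| := by
            refine Finset.sum_le_sum fun j _ => ?_
            rw [Matrix.mul_apply]
            exact (Finset.abs_sum_le_sum_abs _ _).trans (le_of_eq (by simp [abs_mul]))
        _ = ∑ k, |R i k| * ∑ j, |E k j| := by
            rw [Finset.sum_comm]
            simp [Finset.mul_sum]
        _ ≤ ∑ k, |R i k| * ‖E‖ :=
            Finset.sum_le_sum fun k _ => mul_le_mul_of_nonneg_left (rowE k) (abs_nonneg _)
        _ = ‖E‖ * ∑ k, |R i k| := by rw [← Finset.sum_mul, mul_comm]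
    have key : ∑ j, |E i j| ≤ ∑ j, |F i j| + ‖E‖ * ∑ j, |R i j| := by
      calc ∑ j, |E i j| = ∑ j, |F i j + (R * E) i j| := by
            exact Finset.sum_congr rfl fun j _ => by rw [hEij i j]
        _ ≤ ∑ j, (|F i j| + |(R * E) i j|) :=
            Finset.sum_le_sum fun j _ => abs_add_le _ _
        _ = ∑ j, |F i j| + ∑ j, |(R * E) i j| := Finset.sum_add_distrib
        _ ≤ ∑ j, |F i j| + ‖E‖ * ∑ j, |R i j| := by linarith [hRE]
    have last : ‖E‖ * ∑ j, |R i j| ≤ ‖F‖ / (1 - ‖R‖) * ∑ j, |R i j| :=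
      mul_le_mul_of_nonneg_right hEb (Finset.sum_nonneg fun j _ => abs_nonneg _)
    rw [rowSumNorm_eq_norm, rowSumNorm_eq_norm]
    linarith [key, last]
end

section
/- Let A, B be real symmetric n×n matrices with B positive definite. Let λ̂ ∈ ℝ and x̂ ∈ ℝⁿ with x̂ ≠ 0. Then there exists a generalized eigenvalue λ of (A,B) (i.e., Ax = λBx for some x ≠ 0) such that |λ − λ̂| ≤ √(‖B⁻¹‖₂) · ‖Ax̂ − λ̂Bx̂‖₂ / √(x̂ᵀBx̂). -/
open Matrix

/-- Euclidean norm of a vector. -/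
noncomputable def vecEnorm {n : ℕ} (v : Fin n → ℝ) : ℝ :=
  Real.sqrt (∑ j, v j ^ 2)

/-- Spectral (operator 2-) norm of a matrix. -/
noncomputable def specNorm {n : ℕ} (M : Matrix (Fin n) (Fin n) ℝ) : ℝ :=
  ⨆ v : Fin n → ℝ, vecEnorm (M.mulVec v) / vecEnorm v

lemma vecEnorm_nonneg {n : ℕ} (v : Fin n → ℝ) : 0 ≤ vecEnorm v := Real.sqrt_nonneg _

lemma vecEnorm_eq_norm {n : ℕ} (v : Fin n → ℝ) :
    vecEnorm v = ‖(WithLp.equiv 2 (Fin n → ℝ)).symm v‖ := by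
  rw [EuclideanSpace.norm_eq]
  simp [vecEnorm, Real.norm_eq_abs, sq_abs]

lemma vecEnorm_sq {n : ℕ} (v : Fin n → ℝ) : vecEnorm v ^ 2 = v ⬝ᵥ v := by
  rw [vecEnorm, Real.sq_sqrt (by positivity)]
  simp [dotProduct, pow_two]

lemma vecEnorm_eq_zero {n : ℕ} {v : Fin n → ℝ} : vecEnorm v = 0 ↔ v = 0 := by
  rw [vecEnorm_eq_norm, norm_eq_zero]
  constructor
  · intro h
    simpa using congrArg (WithLp.equiv 2 (Fin n → ℝ)) h
  · intro h; simp [h]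

lemma dotProduct_le_enorm {n : ℕ} (u v : Fin n → ℝ) : u ⬝ᵥ v ≤ vecEnorm u * vecEnorm v := by
  have h := real_inner_le_norm ((WithLp.equiv 2 (Fin n → ℝ)).symm u)
    ((WithLp.equiv 2 (Fin n → ℝ)).symm v)
  rw [vecEnorm_eq_norm, vecEnorm_eq_norm]
  refine le_trans (le_of_eq ?_) h
  simp [PiLp.inner_apply, RCLike.inner_apply, dotProduct, mul_comm]

lemma vecEnorm_mulVec_le {n : ℕ} (M : Matrix (Fin n) (Fin n) ℝ) (v : Fin n → ℝ) :
    vecEnorm (M.mulVec v) ≤ specNorm M * vecEnorm v := by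
  set T : EuclideanSpace ℝ (Fin n) →L[ℝ] EuclideanSpace ℝ (Fin n) :=
    LinearMap.toContinuousLinearMap (Matrix.toEuclideanLin M) with hT
  have key : ∀ w : Fin n → ℝ, vecEnorm (M.mulVec w) ≤ ‖T‖ * vecEnorm w := by
    intro w
    have h1 : vecEnorm (M.mulVec w) = ‖T ((WithLp.equiv 2 (Fin n → ℝ)).symm w)‖ := by
      rw [vecEnorm_eq_norm]
      congr 1
    rw [h1, vecEnorm_eq_norm w]
    exact T.le_opNorm _
  have hbdd : BddAbove (Set.range fun w : Fin n → ℝ => vecEnorm (M.mulVec w) / vecEnorm w) := by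
    refine ⟨‖T‖, ?_⟩
    rintro x ⟨w, rfl⟩
    rcases eq_or_ne w 0 with rfl | hw
    · simp only [vecEnorm_eq_zero.2 rfl, div_zero]
      exact norm_nonneg T
    · have hpos : 0 < vecEnorm w := lt_of_le_of_ne (vecEnorm_nonneg w) (fun h => hw
        (vecEnorm_eq_zero.1 h.symm))
      rw [div_le_iff₀ hpos]
      exact key w
  rcases eq_or_ne v 0 with rfl | hv
  · have h0 : M.mulVec 0 = 0 := by simp
    rw [h0, vecEnorm_eq_zero.2 rfl]
    have : (0:ℝ) ≤ specNorm M := Real.iSup_nonneg fun w =>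
      div_nonneg (vecEnorm_nonneg _) (vecEnorm_nonneg _)
    simp [vecEnorm_eq_zero.2 rfl, this]
  · have hpos : 0 < vecEnorm v := lt_of_le_of_ne (vecEnorm_nonneg v) (fun h => hv
      (vecEnorm_eq_zero.1 h.symm))
    have := le_ciSup hbdd v
    rw [div_le_iff₀ hpos] at this
    exact this

lemma euclidean_norm_sq {n : ℕ} (w : EuclideanSpace ℝ (Fin n)) :
    ‖w‖ ^ 2 = ∑ i, w i ^ 2 := by
  rw [EuclideanSpace.norm_eq, Real.sq_sqrt (by positivity)]
  simp [Real.norm_eq_abs, sq_abs]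

lemma wilkinson {n : ℕ} (hn : 0 < n) (C : Matrix (Fin n) (Fin n) ℝ) (hC : C.IsHermitian)
    (lh : ℝ) (y : Fin n → ℝ) :
    ∃ (lam : ℝ) (e : Fin n → ℝ), e ≠ 0 ∧ C.mulVec e = lam • e ∧
      |lam - lh| * vecEnorm y ≤ vecEnorm (C.mulVec y - lh • y) := by
  have : Nonempty (Fin n) := ⟨⟨0, hn⟩⟩
  set b := hC.eigenvectorBasis with hb
  set μ := hC.eigenvalues with hμ
  obtain ⟨i₀, -, hmin⟩ := Finset.exists_min_image Finset.univ (fun i => |μ i - lh|)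
    ⟨Classical.arbitrary (Fin n), Finset.mem_univ _⟩
  refine ⟨μ i₀, ⇑(b i₀), ?_, ?_, ?_⟩
  · intro h
    exact b.toBasis.ne_zero i₀ (by
      apply (WithLp.equiv 2 (Fin n → ℝ)).injective
      simpa [OrthonormalBasis.coe_toBasis] using h)
  · exact hC.mulVec_eigenvectorBasis i₀
  · set z : EuclideanSpace ℝ (Fin n) := (WithLp.equiv 2 (Fin n → ℝ)).symm (C.mulVec y - lh • y)
      with hz
    set yE : EuclideanSpace ℝ (Fin n) := (WithLp.equiv 2 (Fin n → ℝ)).symm y with hy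
    have hdot : ∀ (u v : Fin n → ℝ),
        (inner ℝ ((WithLp.equiv 2 (Fin n → ℝ)).symm u) ((WithLp.equiv 2 (Fin n → ℝ)).symm v) : ℝ)
          = u ⬝ᵥ v := by
      intro u v
      simp [PiLp.inner_apply, RCLike.inner_apply, dotProduct, mul_comm]
    have key : ∀ i, b.repr z i = (μ i - lh) * b.repr yE i := by
      intro i
      rw [b.repr_apply_apply, b.repr_apply_apply]
      have h1 : (inner ℝ (b i) z : ℝ) = (⇑(b i) : Fin n → ℝ) ⬝ᵥ (C.mulVec y - lh • y) := by
        rw [hz]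
        exact hdot _ _
      have h2 : (inner ℝ (b i) yE : ℝ) = (⇑(b i) : Fin n → ℝ) ⬝ᵥ y := by
        rw [hy]; exact hdot _ _
      rw [h1, h2]
      have hsym : (⇑(b i) : Fin n → ℝ) ⬝ᵥ (C.mulVec y) = (C.mulVec (⇑(b i))) ⬝ᵥ y := by
        have hCt : Cᵀ = C := by
          rw [← conjTranspose_eq_transpose_of_trivial, hC.eq]
        rw [dotProduct_mulVec, ← mulVec_transpose, hCt]
      rw [dotProduct_sub, hsym, hC.mulVec_eigenvectorBasis i, smul_dotProduct,
        dotProduct_smul]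
      ring_nf
      rw [← hb, ← hμ]; ring
    have hznorm : vecEnorm (C.mulVec y - lh • y) = ‖z‖ := vecEnorm_eq_norm _
    have hynorm : vecEnorm y = ‖yE‖ := vecEnorm_eq_norm _
    rw [hznorm, hynorm]
    have hsq : (|μ i₀ - lh| * ‖yE‖) ^ 2 ≤ ‖z‖ ^ 2 := by
      rw [← b.repr.norm_map z, ← b.repr.norm_map yE, mul_pow,
        euclidean_norm_sq (b.repr z), euclidean_norm_sq (b.repr yE), sq_abs,
        Finset.mul_sum]
      apply Finset.sum_le_sum
      intro i _
      rw [key i, mul_pow]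
      have : (μ i₀ - lh) ^ 2 ≤ (μ i - lh) ^ 2 := by
        have := hmin i (Finset.mem_univ i)
        calc (μ i₀ - lh) ^ 2 = |μ i₀ - lh| ^ 2 := (sq_abs _).symm
          _ ≤ |μ i - lh| ^ 2 := by
              apply pow_le_pow_left₀ (abs_nonneg _) this
          _ = (μ i - lh) ^ 2 := sq_abs _
      exact mul_le_mul_of_nonneg_right this (sq_nonneg _)
    calc |μ i₀ - lh| * ‖yE‖ = Real.sqrt ((|μ i₀ - lh| * ‖yE‖) ^ 2) := by
          rw [Real.sqrt_sq (by positivity)]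
      _ ≤ Real.sqrt (‖z‖ ^ 2) := Real.sqrt_le_sqrt hsq
      _ = ‖z‖ := Real.sqrt_sq (norm_nonneg _)

/-- Residual bound: some generalized eigenvalue of `(A,B)` lies within
`√‖B⁻¹‖₂·‖Ax̂ − λ̂Bx̂‖₂/√(x̂ᵀBx̂)` of `λ̂`. -/
theorem stmt7 {n : ℕ} (A B : Matrix (Fin n) (Fin n) ℝ)
    (hA : A.IsSymm) (hB : B.PosDef) (lh : ℝ) (xh : Fin n → ℝ) (hxh : xh ≠ 0) :
    ∃ (lam : ℝ) (x : Fin n → ℝ), x ≠ 0 ∧ A.mulVec x = lam • B.mulVec x ∧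
      |lam - lh| ≤ Real.sqrt (specNorm B⁻¹) * vecEnorm (A.mulVec xh - lh • B.mulVec xh) /
        Real.sqrt (xh ⬝ᵥ B.mulVec xh) := by
  have hn : 0 < n := by
    rcases Nat.eq_zero_or_pos n with h | h
    · exact absurd (by subst h; funext i; exact absurd i.2 (Nat.not_lt_zero _)) hxh
    · exact h
  set S := (open scoped MatrixOrder in CFC.sqrt B) with hSdef
  have hS : S.PosSemidef := by open scoped MatrixOrder in exact (CFC.sqrt_nonneg B).posSemidef
  have hSS : S * S = B := by open scoped MatrixOrder in exact CFC.sqrt_mul_sqrt_self B hB.posSemidef.nonneg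
  have hdetS : IsUnit S.det := by
    have hd : S.det * S.det = B.det := by rw [← det_mul, hSS]
    have : IsUnit (S.det * S.det) := hd ▸ (isUnit_iff_isUnit_det B).1 hB.isUnit
    exact isUnit_of_mul_isUnit_left this
  have hSinv : S⁻¹ * S = 1 := nonsing_inv_mul S hdetS
  have hSinv' : S * S⁻¹ = 1 := mul_nonsing_inv S hdetS
  have hSt : Sᵀ = S := by rw [← conjTranspose_eq_transpose_of_trivial, hS.1]
  have hSinvt : (S⁻¹)ᵀ = S⁻¹ := by rw [transpose_nonsing_inv, hSt]
  have hBinv : B⁻¹ = S⁻¹ * S⁻¹ := by rw [← hSS, Matrix.mul_inv_rev]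
  set C := S⁻¹ * A * S⁻¹ with hCdef
  have hCherm : C.IsHermitian := by
    rw [Matrix.IsHermitian, conjTranspose_eq_transpose_of_trivial, hCdef,
      transpose_mul, transpose_mul, hSinvt, hA.eq]
    rw [Matrix.mul_assoc]
  obtain ⟨lam, e, he0, heig, hbound⟩ := wilkinson hn C hCherm lh (S.mulVec xh)
  have hSe : S.mulVec (S⁻¹.mulVec e) = e := by
    rw [mulVec_mulVec, hSinv', one_mulVec]
  refine ⟨lam, S⁻¹.mulVec e, ?_, ?_, ?_⟩
  · intro h
    exact he0 (by rw [← hSe, h, mulVec_zero])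
  · have hBS : B * S⁻¹ = S := by rw [← hSS, Matrix.mul_assoc, hSinv', Matrix.mul_one]
    have h1 := congrArg S.mulVec heig
    rw [mulVec_mulVec, hCdef, Matrix.mul_assoc, ← Matrix.mul_assoc S S⁻¹,
      hSinv', Matrix.one_mul, mulVec_smul] at h1
    rw [mulVec_mulVec, mulVec_mulVec, hBS]
    exact h1
  · set r := A.mulVec xh - lh • B.mulVec xh with hrdef
    have hres : C.mulVec (S.mulVec xh) - lh • (S.mulVec xh) = S⁻¹.mulVec r := by
      have hCS : C * S = S⁻¹ * A := by
        rw [hCdef, Matrix.mul_assoc, hSinv, Matrix.mul_one]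
      have hSB : S = S⁻¹ * B := by
        rw [← hSS, ← Matrix.mul_assoc, hSinv, Matrix.one_mul]
      have hL : C.mulVec (S.mulVec xh) = S⁻¹.mulVec (A.mulVec xh) := by
        rw [mulVec_mulVec, hCS, ← mulVec_mulVec]
      have hR : S.mulVec xh = S⁻¹.mulVec (B.mulVec xh) := by
        rw [mulVec_mulVec, ← hSB]
      rw [hrdef, mulVec_sub, mulVec_smul, hL, hR]
    have hspec0 : (0:ℝ) ≤ specNorm B⁻¹ :=
      Real.iSup_nonneg fun w => div_nonneg (vecEnorm_nonneg _) (vecEnorm_nonneg _)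
    have h1 : vecEnorm (S⁻¹.mulVec r) ≤ Real.sqrt (specNorm B⁻¹) * vecEnorm r := by
      have hsq : vecEnorm (S⁻¹.mulVec r) ^ 2 = (B⁻¹.mulVec r) ⬝ᵥ r := by
        rw [vecEnorm_sq, dotProduct_mulVec, ← mulVec_transpose, hSinvt, mulVec_mulVec, ← hBinv]
      have hle : vecEnorm (S⁻¹.mulVec r) ^ 2 ≤ specNorm B⁻¹ * vecEnorm r ^ 2 := by
        rw [hsq]
        calc (B⁻¹.mulVec r) ⬝ᵥ r ≤ vecEnorm (B⁻¹.mulVec r) * vecEnorm r :=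
              dotProduct_le_enorm _ _
          _ ≤ (specNorm B⁻¹ * vecEnorm r) * vecEnorm r :=
              mul_le_mul_of_nonneg_right (vecEnorm_mulVec_le _ _) (vecEnorm_nonneg _)
          _ = specNorm B⁻¹ * vecEnorm r ^ 2 := by ring
      calc vecEnorm (S⁻¹.mulVec r) = Real.sqrt (vecEnorm (S⁻¹.mulVec r) ^ 2) := by
            rw [Real.sqrt_sq (vecEnorm_nonneg _)]
        _ ≤ Real.sqrt (specNorm B⁻¹ * vecEnorm r ^ 2) := Real.sqrt_le_sqrt hle
        _ = Real.sqrt (specNorm B⁻¹) * vecEnorm r := by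
            rw [Real.sqrt_mul hspec0, Real.sqrt_sq (vecEnorm_nonneg _)]
    have h2 : vecEnorm (S.mulVec xh) = Real.sqrt (xh ⬝ᵥ B.mulVec xh) := by
      have : vecEnorm (S.mulVec xh) ^ 2 = xh ⬝ᵥ B.mulVec xh := by
        rw [vecEnorm_sq, dotProduct_mulVec, ← mulVec_transpose, hSt, mulVec_mulVec, hSS,
          dotProduct_comm]
      rw [← this, Real.sqrt_sq (vecEnorm_nonneg _)]
    have hy0 : S.mulVec xh ≠ 0 := by
      intro h
      apply hxh
      have := congrArg S⁻¹.mulVec h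
      rwa [mulVec_mulVec, hSinv, one_mulVec, mulVec_zero] at this
    have hypos : 0 < vecEnorm (S.mulVec xh) :=
      lt_of_le_of_ne (vecEnorm_nonneg _) (fun h => hy0 (vecEnorm_eq_zero.1 h.symm))
    rw [← h2] at *
    rw [le_div_iff₀ hypos]
    calc |lam - lh| * vecEnorm (S.mulVec xh) ≤ vecEnorm (C.mulVec (S.mulVec xh) - lh • (S.mulVec xh)) :=
          hbound
      _ = vecEnorm (S⁻¹.mulVec r) := by rw [hres]
      _ ≤ Real.sqrt (specNorm B⁻¹) * vecEnorm r := h1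
end
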